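/- For each n, the set M_n = {f ∈ R * F : f(n) = r and n = min supp f} is homeomorphic to R * A_{n+1}, where A_{n+1} = {F ⊆ ℕ : |F| ≤ n+1}; consequently M_n^{(n+1)} = {r·χ_{n}}. -/

import Mathlib

open Filter Topology

def memF (F : Finset ℕ) : Prop :=
  F = ∅ ∨ (F.Nonempty ∧ F.card ≤ sInf (F : Set ℕ) + 2)

def derivSet {α : Type*} [TopologicalSpace α] (A : Set α) : Set α :=
  {x | AccPt x (𝓟 A)}

def RF (R : Set ℝ) : Set (ℕ → ℝ) :=
  {f | (∀ i, f i ∈ R) ∧ ∃ F : Finset ℕ, memF F ∧ ∀ i, f i ≠ 0 ↔ i ∈ F}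

def RA (R : Set ℝ) (n : ℕ) : Set (ℕ → ℝ) :=
  {f | (∀ i, f i ∈ R) ∧ ∃ F : Finset ℕ, F.card ≤ n ∧ ∀ i, f i ≠ 0 → i ∈ F}

/-- `M_n = {f ∈ R * 𝓕 : f(n) = r and n = min supp f}`. -/
def Mset (R : Set ℝ) (r : ℝ) (n : ℕ) : Set (ℕ → ℝ) :=
  {f | f ∈ RF R ∧ f n = r ∧ ∀ i < n, f i = 0}

/-- Auxiliary family: values in `R`, value `r` at `n`, zero below `n`, and at most `m`
nonzero coordinates above `n`. -/
def Mm (R : Set ℝ) (r : ℝ) (n m : ℕ) : Set (ℕ → ℝ) :=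
  {f | (∀ i, f i ∈ R) ∧ f n = r ∧ (∀ i < n, f i = 0) ∧
    ∃ F : Finset ℕ, F.card ≤ m ∧ ∀ i, n < i → f i ≠ 0 → i ∈ F}

lemma Mset_eq_Mm (R : Set ℝ) (r : ℝ) (hr0 : r ≠ 0) (n : ℕ) :
    Mset R r n = Mm R r n (n + 1) := by
  classical
  ext f
  constructor
  · rintro ⟨⟨hmem, F, hF, hsupp⟩, hn, hlt⟩
    have hnF : n ∈ F := (hsupp n).1 (by rw [hn]; exact hr0)
    have hmin : ∀ i ∈ F, n ≤ i := by
      intro i hi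
      by_contra h
      exact ((hsupp i).2 hi) (hlt i (by omega))
    have hInf : sInf (F : Set ℕ) = n :=
      le_antisymm (Nat.sInf_le hnF)
        (hmin _ (Nat.sInf_mem (⟨n, hnF⟩ : Set.Nonempty (F : Set ℕ))))
    have hcard : F.card ≤ n + 2 := by
      rcases hF with h | ⟨_, h⟩
      · simp [h]
      · rwa [hInf] at h
    refine ⟨hmem, hn, hlt, F.erase n, ?_, ?_⟩
    · rw [Finset.card_erase_of_mem hnF]; omega
    · intro i hi hne
      exact Finset.mem_erase.2 ⟨by omega, (hsupp i).1 hne⟩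
  · rintro ⟨hmem, hn, hlt, F, hFc, hFb⟩
    refine ⟨⟨hmem, (insert n F).filter (fun i => f i ≠ 0), ?_, ?_⟩, hn, hlt⟩
    · set G := (insert n F).filter (fun i => f i ≠ 0) with hG
      have hnG : n ∈ G :=
        Finset.mem_filter.2 ⟨Finset.mem_insert_self n F, by rw [hn]; exact hr0⟩
      have hmin : ∀ i ∈ G, n ≤ i := by
        intro i hi
        rw [hG, Finset.mem_filter] at hi
        by_contra h
        exact hi.2 (hlt i (by omega))
      have hInf : sInf (G : Set ℕ) = n :=
        le_antisymm (Nat.sInf_le hnG)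
          (hmin _ (Nat.sInf_mem (⟨n, hnG⟩ : Set.Nonempty (G : Set ℕ))))
      refine Or.inr ⟨⟨n, hnG⟩, ?_⟩
      rw [hInf]
      calc G.card ≤ (insert n F).card := Finset.card_filter_le _ _
        _ ≤ F.card + 1 := Finset.card_insert_le _ _
        _ ≤ n + 2 := by omega
    · intro i
      constructor
      · intro hne
        refine Finset.mem_filter.2 ⟨Finset.mem_insert.2 ?_, hne⟩
        rcases lt_trichotomy i n with h | h | h
        · exact absurd (hlt i h) hne
        · exact Or.inl h
        · exact Or.inr (hFb i h hne)
      · intro hi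
        exact (Finset.mem_filter.1 hi).2

lemma Mm_isClosed (R : Set ℝ) (hR : IsClosed R) (r : ℝ) (n m : ℕ) :
    IsClosed (Mm R r n m) := by
  classical
  have h1 : IsClosed {f : ℕ → ℝ | ∀ i, f i ∈ R} := by
    have : {f : ℕ → ℝ | ∀ i, f i ∈ R} = ⋂ i, (fun f : ℕ → ℝ => f i) ⁻¹' R := by
      ext f; simp
    rw [this]
    exact isClosed_iInter fun i => hR.preimage (continuous_apply i)
  have h2 : IsClosed {f : ℕ → ℝ | f n = r} :=
    isClosed_singleton.preimage (continuous_apply n)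
  have h3 : IsClosed {f : ℕ → ℝ | ∀ i < n, f i = 0} := by
    have : {f : ℕ → ℝ | ∀ i < n, f i = 0} =
        ⋂ i, ⋂ (_ : i < n), (fun f : ℕ → ℝ => f i) ⁻¹' {0} := by
      ext f; simp
    rw [this]
    exact isClosed_iInter fun i => isClosed_iInter fun _ =>
      isClosed_singleton.preimage (continuous_apply i)
  have h4 : IsClosed {f : ℕ → ℝ | ∃ F : Finset ℕ, F.card ≤ m ∧
      ∀ i, n < i → f i ≠ 0 → i ∈ F} := by
    rw [← isOpen_compl_iff]
    have hc : {f : ℕ → ℝ | ∃ F : Finset ℕ, F.card ≤ m ∧ ∀ i, n < i → f i ≠ 0 → i ∈ F}ᶜ =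
        ⋃ (S : Finset ℕ), ⋃ (_ : S.card = m + 1 ∧ ∀ i ∈ S, n < i),
          {f : ℕ → ℝ | ∀ i ∈ S, f i ≠ 0} := by
      ext f
      simp only [Set.mem_compl_iff, Set.mem_setOf_eq, Set.mem_iUnion]
      constructor
      · intro hno
        set T : Set ℕ := {i | n < i ∧ f i ≠ 0} with hT
        by_cases hfin : T.Finite
        · have hcard : m + 1 ≤ hfin.toFinset.card := by
            by_contra h
            push_neg at h
            exact hno ⟨hfin.toFinset, by omega, fun i hi hne =>
              hfin.mem_toFinset.2 ⟨hi, hne⟩⟩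
          obtain ⟨S, hS, hScard⟩ := Finset.exists_subset_card_eq (s := hfin.toFinset) (n := m + 1) hcard
          refine ⟨S, ⟨hScard, fun i hi => (hfin.mem_toFinset.1 (hS hi)).1⟩,
            fun i hi => (hfin.mem_toFinset.1 (hS hi)).2⟩
        · obtain ⟨S, hS, hScard⟩ :=
            Set.Infinite.exists_subset_card_eq hfin (m + 1)
          refine ⟨S, ⟨hScard, fun i hi => ?_⟩, fun i hi => ?_⟩
          · have h : n < i ∧ f i ≠ 0 := hS hi
            exact h.1
          · have h : n < i ∧ f i ≠ 0 := hS hi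
            exact h.2
      · rintro ⟨S, ⟨hScard, hSgt⟩, hSne⟩ ⟨F, hFc, hFb⟩
        have : S ⊆ F := fun i hi => hFb i (hSgt i hi) (hSne i hi)
        have := Finset.card_le_card this
        omega
    rw [hc]
    refine isOpen_iUnion fun S => isOpen_iUnion fun _ => ?_
    have : {f : ℕ → ℝ | ∀ i ∈ S, f i ≠ 0} =
        ⋂ i ∈ S, (fun f : ℕ → ℝ => f i) ⁻¹' ({0}ᶜ) := by
      ext f; simp
    rw [this]
    exact isOpen_biInter_finset fun i _ =>
      (isClosed_singleton.preimage (continuous_apply i)).isOpen_compl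
  have : Mm R r n m = {f : ℕ → ℝ | ∀ i, f i ∈ R} ∩ ({f : ℕ → ℝ | f n = r} ∩
      ({f : ℕ → ℝ | ∀ i < n, f i = 0} ∩ {f : ℕ → ℝ | ∃ F : Finset ℕ, F.card ≤ m ∧
        ∀ i, n < i → f i ≠ 0 → i ∈ F})) := by
    ext f
    constructor
    · rintro ⟨a, b, c, d⟩
      exact ⟨a, b, c, d⟩
    · rintro ⟨a, b, c, d⟩
      exact ⟨a, b, c, d⟩
  rw [this]
  exact h1.inter (h2.inter (h3.inter h4))

lemma derivSet_Mm (R : Set ℝ) (hcomp : IsCompact R)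
    (hacc : ∀ x : ℝ, AccPt x (𝓟 R) ↔ x = 0)
    (r : ℝ) (hr : r ∈ R) (hr0 : r ≠ 0) (n m : ℕ) :
    derivSet (Mm R r n (m + 1)) = Mm R r n m := by
  classical
  apply Set.eq_of_subset_of_subset
  · -- derived set is contained in Mm m
    intro f hf
    have hfM : f ∈ Mm R r n (m + 1) := by
      have : f ∈ closure (Mm R r n (m + 1)) :=
        mem_closure_iff_clusterPt.2 (AccPt.clusterPt hf)
      rwa [(Mm_isClosed R hcomp.isClosed r n (m + 1)).closure_eq] at this
    obtain ⟨hmem, hfn, hlt, F, hFc, hFb⟩ := hfM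
    refine ⟨hmem, hfn, hlt, ?_⟩
    by_contra hno
    -- the set of nonzero coordinates above n
    set T : Set ℕ := {i | n < i ∧ f i ≠ 0} with hT
    have hTF : T ⊆ (F : Set ℕ) := fun i hi => hFb i hi.1 hi.2
    have hfin : T.Finite := Set.Finite.subset F.finite_toSet hTF
    have hcard : m + 1 ≤ hfin.toFinset.card := by
      by_contra h
      push_neg at h
      exact hno ⟨hfin.toFinset, by omega, fun i hi hne =>
        hfin.mem_toFinset.2 ⟨hi, hne⟩⟩
    set S : Finset ℕ := insert n hfin.toFinset with hS
    have hSne : ∀ i ∈ S, f i ≠ 0 := by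
      intro i hi
      rcases Finset.mem_insert.1 hi with h | h
      · rw [h, hfn]; exact hr0
      · exact (hfin.mem_toFinset.1 h).2
    -- isolation neighborhoods
    have hV : ∀ i : ℕ, ∃ V ∈ 𝓝 (f i), ∀ y ∈ V, y ∈ R → f i ≠ 0 → y = f i := by
      intro i
      by_cases h : f i = 0
      · exact ⟨Set.univ, Filter.univ_mem, fun y _ _ hne => absurd h hne⟩
      · have hna : ¬ AccPt (f i) (𝓟 R) := by rw [hacc]; exact h
        rw [accPt_iff_nhds] at hna
        push_neg at hna
        obtain ⟨V, hV1, hV2⟩ := hna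
        exact ⟨V, hV1, fun y hy hyR _ => hV2 y ⟨hy, hyR⟩⟩
    choose V hV1 hV2 using hV
    have hUmem : (⋂ i ∈ S, (fun g : ℕ → ℝ => g i) ⁻¹' V i) ∈ 𝓝 f := by
      refine (Filter.biInter_mem S.finite_toSet).2 fun i _ =>
        (continuous_apply i).continuousAt.preimage_mem_nhds (hV1 i)
    rw [derivSet, Set.mem_setOf_eq, accPt_iff_nhds] at hf
    obtain ⟨g, ⟨hgU, hgM⟩, hgne⟩ := hf _ hUmem
    obtain ⟨hgmem, hgn, hglt, G, hGc, hGb⟩ := hgM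
    have hgf : ∀ i ∈ S, g i = f i := by
      intro i hi
      have : g i ∈ V i := by
        have := Set.mem_iInter₂.1 hgU i hi
        exact this
      exact hV2 i (g i) this (hgmem i) (hSne i hi)
    -- G equals the support of f above n
    have hsub : hfin.toFinset ⊆ G := by
      intro i hi
      have hiT := hfin.mem_toFinset.1 hi
      have : g i ≠ 0 := by
        rw [hgf i (Finset.mem_insert.2 (Or.inr hi))]
        exact hiT.2
      exact hGb i hiT.1 this
    have hGeq : hfin.toFinset = G :=
      Finset.eq_of_subset_of_card_le hsub (hGc.trans hcard)
    apply hgne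
    funext i
    rcases lt_trichotomy i n with h | h | h
    · rw [hglt i h, hlt i h]
    · rw [h, hgn, hfn]
    · by_cases hfi : f i = 0
      · rw [hfi]
        by_contra hgi
        have : i ∈ G := hGb i h hgi
        rw [← hGeq, hfin.mem_toFinset] at this
        exact this.2 hfi
      · exact hgf i (Finset.mem_insert.2 (Or.inr (hfin.mem_toFinset.2 ⟨h, hfi⟩)))
  · -- Mm m is contained in the derived set
    intro f hf
    obtain ⟨hmem, hfn, hlt, F, hFc, hFb⟩ := hf
    rw [derivSet, Set.mem_setOf_eq, accPt_iff_nhds]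
    intro U hU
    rw [nhds_pi, Filter.mem_pi'] at hU
    obtain ⟨I, t, ht, hsub⟩ := hU
    set k : ℕ := (insert n (I ∪ F)).sup id + 1 with hk
    have hkgt : ∀ i ∈ insert n (I ∪ F), i < k := by
      intro i hi
      have : i ≤ (insert n (I ∪ F)).sup id := Finset.le_sup (f := id) hi
      omega
    have hkn : n < k := hkgt n (Finset.mem_insert_self _ _)
    have hkI : k ∉ I := fun h => by
      have := hkgt k (Finset.mem_insert.2 (Or.inr (Finset.mem_union_left _ h)))
      omega
    have hkF : k ∉ F := fun h => by
      have := hkgt k (Finset.mem_insert.2 (Or.inr (Finset.mem_union_right _ h)))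
      omega
    have hfk : f k = 0 := by
      by_contra h
      exact hkF (hFb k hkn h)
    set g : ℕ → ℝ := fun i => if i = k then r else f i with hg
    refine ⟨g, ⟨hsub ?_, ?_, ?_, ?_, insert k F, ?_, ?_⟩, ?_⟩
    · intro i hi
      have hik : i ≠ k := fun h => hkI (h ▸ hi)
      simp only [hg, if_neg hik]
      exact mem_of_mem_nhds (ht i)
    · intro i
      by_cases h : i = k
      · simpa [hg, h] using hr
      · simpa [hg, h] using hmem i
    · simp only [hg, if_neg (by omega : n ≠ k)]
      exact hfn
    · intro i hi
      simp only [hg, if_neg (by omega : i ≠ k)]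
      exact hlt i hi
    · calc (insert k F).card ≤ F.card + 1 := Finset.card_insert_le _ _
        _ ≤ m + 1 := by omega
    · intro i hi hne
      by_cases h : i = k
      · exact Finset.mem_insert.2 (Or.inl h)
      · refine Finset.mem_insert.2 (Or.inr (hFb i hi ?_))
        simpa [hg, h] using hne
    · intro h
      have : g k = f k := by rw [h]
      simp only [hg, if_pos rfl, hfk] at this
      exact hr0 this

lemma iter_derivSet_Mm (R : Set ℝ) (hcomp : IsCompact R)
    (hacc : ∀ x : ℝ, AccPt x (𝓟 R) ↔ x = 0)
    (r : ℝ) (hr : r ∈ R) (hr0 : r ≠ 0) (n : ℕ) :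
    ∀ k m : ℕ, derivSet^[k] (Mm R r n (m + k)) = Mm R r n m := by
  intro k
  induction k with
  | zero => intro m; simp
  | succ k ih =>
    intro m
    rw [Function.iterate_succ_apply]
    have h1 : derivSet (Mm R r n (m + (k + 1))) = Mm R r n (m + k) := by
      have := derivSet_Mm R hcomp hacc r hr hr0 n (m + k)
      rwa [show m + k + 1 = m + (k + 1) by omega] at this
    rw [h1, ih m]

lemma Mm_zero (R : Set ℝ) (h0 : (0 : ℝ) ∈ R) (r : ℝ) (hr : r ∈ R) (n : ℕ) :
    Mm R r n 0 = {fun i => if i = n then r else 0} := by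
  ext f
  constructor
  · rintro ⟨hmem, hfn, hlt, F, hFc, hFb⟩
    have hF : F = ∅ := Finset.card_eq_zero.1 (le_antisymm hFc (Nat.zero_le _))
    have hz : ∀ i, n < i → f i = 0 := by
      intro i hi
      by_contra h
      simpa [hF] using hFb i hi h
    have : f = fun i => if i = n then r else 0 := by
      funext i
      rcases lt_trichotomy i n with h | h | h
      · rw [hlt i h, if_neg (by omega : ¬ i = n)]
      · rw [h, hfn, if_pos rfl]
      · rw [hz i h, if_neg (by omega : ¬ i = n)]
    exact this
  · rintro rfl
    refine ⟨fun i => ?_, by show (if n = n then r else 0) = r; rw [if_pos rfl],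
      fun i hi => by show (if i = n then r else 0) = 0; rw [if_neg (by omega : ¬ i = n)],
      ∅, le_refl _, fun i hi hne =>
        absurd (show (if i = n then r else 0) = 0 from if_neg (by omega : ¬ i = n)) hne⟩
    show (if i = n then r else 0) ∈ R
    by_cases h : i = n
    · rw [if_pos h]; exact hr
    · rw [if_neg h]; exact h0

lemma Mset_homeo (R : Set ℝ) (h0 : (0 : ℝ) ∈ R) (r : ℝ) (hr : r ∈ R) (hr0 : r ≠ 0)
    (n : ℕ) : Nonempty (Mset R r n ≃ₜ RA R (n + 1)) := by
  classical
  have hM : Mset R r n = Mm R r n (n + 1) := Mset_eq_Mm R r hr0 n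
  refine ⟨{
    toFun := fun f => ⟨fun i => f.1 (n + 1 + i), ?_⟩
    invFun := fun g => ⟨fun i => if i < n then 0 else if i = n then r
      else g.1 (i - (n + 1)), ?_⟩
    left_inv := ?_
    right_inv := ?_
    continuous_toFun := ?_
    continuous_invFun := ?_ }⟩
  · -- forward membership
    have hf : (f : ℕ → ℝ) ∈ Mm R r n (n + 1) := by rw [← hM]; exact f.2
    obtain ⟨hmem, hfn, hlt, F, hFc, hFb⟩ := hf
    refine ⟨fun i => hmem _, F.image (fun j => j - (n + 1)), ?_, ?_⟩
    · exact (Finset.card_image_le).trans hFc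
    · intro i hne
      refine Finset.mem_image.2 ⟨n + 1 + i, hFb _ (by omega) hne, by omega⟩
  · -- backward membership
    obtain ⟨hmem, F, hFc, hFb⟩ := g.2
    rw [hM]
    refine ⟨fun i => ?_, ?_, fun i hi => ?_, F.image (fun j => j + (n + 1)), ?_, ?_⟩
    · dsimp only
      split_ifs with h1 h2
      · exact h0
      · exact hr
      · exact hmem _
    · simp
    · simp [hi]
    · exact (Finset.card_image_le).trans hFc
    · intro i hi hne
      dsimp only at hne
      rw [if_neg (by omega : ¬ i < n), if_neg (by omega : ¬ i = n)] at hne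
      exact Finset.mem_image.2 ⟨i - (n + 1), hFb _ hne, by show i - (n + 1) + (n + 1) = i; omega⟩
  · -- left inverse
    intro f
    have hf : (f : ℕ → ℝ) ∈ Mm R r n (n + 1) := by rw [← hM]; exact f.2
    obtain ⟨hmem, hfn, hlt, F, hFc, hFb⟩ := hf
    apply Subtype.ext
    funext i
    dsimp only
    rcases lt_trichotomy i n with h | h | h
    · rw [if_pos h, hlt i h]
    · rw [if_neg (by omega), if_pos h, h, hfn]
    · rw [if_neg (by omega), if_neg (by omega),
        show n + 1 + (i - (n + 1)) = i from by omega]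
  · -- right inverse
    intro g
    apply Subtype.ext
    funext i
    dsimp only
    rw [if_neg (by omega : ¬ n + 1 + i < n), if_neg (by omega : ¬ n + 1 + i = n),
      Nat.add_sub_cancel_left]
  · refine Continuous.subtype_mk ?_ _
    refine continuous_pi fun i => ?_
    exact (continuous_apply (n + 1 + i)).comp continuous_subtype_val
  · refine Continuous.subtype_mk (continuous_pi fun i => ?_) _
    by_cases h1 : i < n
    · simp only [if_pos h1]; exact continuous_const
    · by_cases h2 : i = n
      · simp only [if_neg h1, if_pos h2]; exact continuous_const
      · simp only [if_neg h1, if_neg h2]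
        exact (continuous_apply (i - (n + 1))).comp continuous_subtype_val

/-- `M_n` is homeomorphic to `R * 𝒜_{n+1}`; consequently its `(n+1)`-st
Cantor–Bendixson derivative is the singleton `{r · χ_{n}}`. -/
theorem Mset_homeomorph_derivSet (R : Set ℝ) (hc : R.Countable) (hcomp : IsCompact R)
    (hpos : R ⊆ Set.Ici 0) (h0 : (0 : ℝ) ∈ R)
    (hacc : ∀ x : ℝ, AccPt x (𝓟 R) ↔ x = 0)
    (r : ℝ) (hr : r ∈ R) (hrpos : 0 < r) (n : ℕ) :
    Nonempty (Mset R r n ≃ₜ RA R (n + 1)) ∧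
      derivSet^[n + 1] (Mset R r n) = {fun i => if i = n then r else 0} := by
  have hr0 : r ≠ 0 := ne_of_gt hrpos
  refine ⟨Mset_homeo R h0 r hr hr0 n, ?_⟩
  rw [Mset_eq_Mm R r hr0 n]
  have h := iter_derivSet_Mm R hcomp hacc r hr hr0 n (n + 1) 0
  rw [Nat.zero_add] at h
  rw [h, Mm_zero R h0 r hr n]
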